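/- arXiv:1410.1294 — 5 statements merged into one kernel-verified Lean document; each statement's English description precedes it below -/
import Mathlib

section
/- Let X be a complex Banach space, let T ∈ B(X) be power-bounded with M := sup_{n≥0} ‖Tⁿ‖ < ∞, let a ∈ ℓ¹(ℕ), and let λ ∈ 𝕋. Then (1/N)·‖∑_{n=0}^{N-1} conj(λ)ⁿ Tⁿ (â(T) − â(λ)·I)‖ → 0 as N → ∞, where the norm is the operator norm on B(X). (This is the ℤ₊-instance, with Følner sets the intervals {0,…,N−1}, of Lemma 3.3 of the paper.) -/
open Filter Topology

/-- ℤ₊-instance of Lemma 3.3: for a power-bounded operator `T` on a complex Banach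
space, `a ∈ ℓ¹(ℕ)` and `λ` on the unit circle, the Cesàro averages
`(1/N)·‖∑_{n<N} conj(λ)ⁿ Tⁿ (â(T) − â(λ)·I)‖` tend to `0`. -/
theorem stmt_0 {X : Type*} [NormedAddCommGroup X] [NormedSpace ℂ X] [CompleteSpace X]
    (T : X →L[ℂ] X) (M : ℝ) (hM : ∀ n : ℕ, ‖T ^ n‖ ≤ M)
    (a : ℕ → ℂ) (ha : Summable fun n : ℕ => ‖a n‖)
    (lam : ℂ) (hlam : ‖lam‖ = 1) :
    Tendsto (fun N : ℕ =>
        (1 / (N : ℝ)) * ‖∑ n ∈ Finset.range N, (starRingEnd ℂ lam) ^ n •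
          (T ^ n * ((∑' m : ℕ, a m • T ^ m) - (∑' m : ℕ, a m * lam ^ m) • (1 : X →L[ℂ] X)))‖)
      atTop (nhds 0) := by
  have hM0 : 0 ≤ M := le_trans (norm_nonneg _) (hM 0)
  set lc := starRingEnd ℂ lam with hlc
  have hlcnorm : ‖lc‖ = 1 := by rw [hlc, RCLike.norm_conj, hlam]
  have hmc : lam * lc = 1 := by
    have h1 : Complex.normSq lam = 1 := by
      rw [← Complex.sq_norm, hlam]; norm_num
    rw [hlc, Complex.mul_conj, h1, Complex.ofReal_one]
  have hpow : ∀ m n : ℕ, lam ^ m * lc ^ (n + m) = lc ^ n := by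
    intro m n
    calc lam ^ m * lc ^ (n + m) = (lam * lc) ^ m * lc ^ n := by ring
    _ = lc ^ n := by rw [hmc, one_pow, one_mul]
  set U : ℕ → (X →L[ℂ] X) := fun k => lc ^ k • T ^ k with hU
  have hUnorm : ∀ k, ‖U k‖ ≤ M := by
    intro k
    rw [hU]
    rw [show (fun k => lc ^ k • T ^ k) k = lc ^ k • T ^ k from rfl,
      norm_smul (lc ^ k) (T ^ k), norm_pow, hlcnorm, one_pow, one_mul]
    exact hM k
  have hUd : ∀ n m : ℕ, ‖U (n + m) - U n‖ ≤ 2 * M := fun n m =>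
    (norm_sub_le _ _).trans (by linarith [hUnorm (n + m), hUnorm n])
  have hsa : Summable fun m : ℕ => a m • T ^ m := by
    apply Summable.of_norm_bounded (ha.mul_right M)
    intro m
    rw [norm_smul (a m) (T ^ m)]
    exact mul_le_mul_of_nonneg_left (hM m) (norm_nonneg _)
  have hc : Summable fun m : ℕ => a m * lam ^ m := by
    apply Summable.of_norm_bounded (ha.mul_right 1)
    intro m
    rw [norm_mul, norm_pow, hlam, one_pow]
  set A : X →L[ℂ] X := ∑' m : ℕ, a m • T ^ m with hA
  set c : ℂ := ∑' m : ℕ, a m * lam ^ m with hcdef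
  -- per-n identity
  have hterm : ∀ n : ℕ, lc ^ n • (T ^ n * (A - c • 1)) =
      ∑' m : ℕ, (a m * lam ^ m) • (U (n + m) - U n) := by
    intro n
    have hsum1' : Summable fun m : ℕ => a m • T ^ (n + m) := by
      apply Summable.of_norm_bounded (ha.mul_right M)
      intro m
      rw [norm_smul (a m) (T ^ (n + m))]
      exact mul_le_mul_of_nonneg_left (hM _) (norm_nonneg _)
    have hsum2' : Summable fun m : ℕ => (a m * lam ^ m) • T ^ n := hc.smul_const _
    have hsum1 : Summable fun m : ℕ => (lc ^ n * a m) • T ^ (n + m) := by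
      simpa [mul_smul] using hsum1'.const_smul (lc ^ n)
    have hsum2 : Summable fun m : ℕ => (lc ^ n * (a m * lam ^ m)) • T ^ n := by
      simpa [mul_smul] using hsum2'.const_smul (lc ^ n)
    have e1 : T ^ n * A = ∑' m : ℕ, a m • T ^ (n + m) := by
      rw [hA, ← hsa.tsum_mul_left (T ^ n)]
      exact tsum_congr fun m => by rw [mul_smul_comm, ← pow_add]
    have e2 : c • (T ^ n : X →L[ℂ] X) = ∑' m : ℕ, (a m * lam ^ m) • T ^ n := by
      rw [hcdef]; exact (Summable.tsum_smul_const hc (T ^ n)).symm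
    calc lc ^ n • (T ^ n * (A - c • 1))
        = lc ^ n • (T ^ n * A) - lc ^ n • (c • (T ^ n : X →L[ℂ] X)) := by
          rw [mul_sub, smul_sub, mul_smul_comm, mul_one]
      _ = (∑' m : ℕ, (lc ^ n * a m) • T ^ (n + m)) -
            ∑' m : ℕ, (lc ^ n * (a m * lam ^ m)) • T ^ n := by
          rw [e1, e2, ← Summable.tsum_const_smul (lc ^ n) hsum1', ← Summable.tsum_const_smul (lc ^ n) hsum2']
          congr 1 <;> exact tsum_congr fun m => (smul_smul _ _ _)
      _ = ∑' m : ℕ, ((lc ^ n * a m) • T ^ (n + m) - (lc ^ n * (a m * lam ^ m)) • T ^ n) :=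
          (Summable.tsum_sub hsum1 hsum2).symm
      _ = ∑' m : ℕ, (a m * lam ^ m) • (U (n + m) - U n) := by
          refine tsum_congr fun m => ?_
          rw [hU]
          rw [show (fun k => lc ^ k • T ^ k) (n + m) = lc ^ (n + m) • T ^ (n + m) from rfl,
            show (fun k => lc ^ k • T ^ k) n = lc ^ n • T ^ n from rfl]
          rw [smul_sub, smul_smul, smul_smul]
          have h1 : lc ^ n * a m = a m * lam ^ m * lc ^ (n + m) := by
            rw [mul_assoc, hpow m n, mul_comm]
          have h2 : lc ^ n * (a m * lam ^ m) = a m * lam ^ m * lc ^ n := by ring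
          rw [h1, h2]
  -- summability of the m-series for each n
  have hsg : ∀ n : ℕ, Summable fun m : ℕ => (a m * lam ^ m) • (U (n + m) - U n) := by
    intro n
    apply Summable.of_norm_bounded (ha.mul_right (2 * M))
    intro m
    rw [norm_smul (a m * lam ^ m) (U (n + m) - U n), norm_mul, norm_pow, hlam, one_pow, mul_one]
    exact mul_le_mul_of_nonneg_left (hUd n m) (norm_nonneg _)
  -- swap the finite sum and the tsum
  have hswap : ∀ N : ℕ, ∑ n ∈ Finset.range N, lc ^ n • (T ^ n * (A - c • 1))
      = ∑' m : ℕ, (a m * lam ^ m) • (∑ n ∈ Finset.range N, (U (n + m) - U n)) := by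
    intro N
    calc ∑ n ∈ Finset.range N, lc ^ n • (T ^ n * (A - c • 1))
        = ∑ n ∈ Finset.range N, ∑' m : ℕ, (a m * lam ^ m) • (U (n + m) - U n) :=
          Finset.sum_congr rfl fun n _ => hterm n
      _ = ∑' m : ℕ, ∑ n ∈ Finset.range N, (a m * lam ^ m) • (U (n + m) - U n) :=
          (Summable.tsum_finsetSum fun n _ => hsg n).symm
      _ = ∑' m : ℕ, (a m * lam ^ m) • (∑ n ∈ Finset.range N, (U (n + m) - U n)) :=
          tsum_congr fun m => Finset.smul_sum.symm
  -- telescoping bound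
  have hcard : ∀ (s : Finset ℕ), ‖∑ k ∈ s, U k‖ ≤ s.card * M := by
    intro s
    refine (norm_sum_le _ _).trans ?_
    calc ∑ k ∈ s, ‖U k‖ ≤ ∑ _k ∈ s, M := Finset.sum_le_sum fun k _ => hUnorm k
    _ = s.card * M := by rw [Finset.sum_const, nsmul_eq_mul]
  have hV : ∀ (m N : ℕ), ‖∑ n ∈ Finset.range N, (U (n + m) - U n)‖ ≤ 2 * M * (min m N : ℕ) := by
    intro m N
    rcases le_or_gt N m with h | h
    · rw [min_eq_right h]
      calc ‖∑ n ∈ Finset.range N, (U (n + m) - U n)‖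
          ≤ ∑ n ∈ Finset.range N, ‖U (n + m) - U n‖ := norm_sum_le _ _
        _ ≤ ∑ _n ∈ Finset.range N, (2 * M) := Finset.sum_le_sum fun n _ => hUd n m
        _ = 2 * M * N := by rw [Finset.sum_const, Finset.card_range, nsmul_eq_mul]; ring
    · have hmN : m ≤ N := h.le
      rw [min_eq_left hmN]
      have e3 : ∑ n ∈ Finset.range N, U (n + m) = ∑ k ∈ Finset.Ico m (N + m), U k := by
        rw [Finset.sum_Ico_eq_sum_range, Nat.add_sub_cancel]
        exact Finset.sum_congr rfl fun k _ => by rw [add_comm]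
      have e4 : ∑ k ∈ Finset.Ico m (N + m), U k
          = ∑ k ∈ Finset.Ico m N, U k + ∑ k ∈ Finset.Ico N (N + m), U k :=
        (Finset.sum_Ico_consecutive _ hmN (Nat.le_add_right N m)).symm
      have e5 : ∑ n ∈ Finset.range N, U n
          = ∑ k ∈ Finset.Ico 0 m, U k + ∑ k ∈ Finset.Ico m N, U k := by
        rw [Finset.range_eq_Ico]
        exact (Finset.sum_Ico_consecutive _ (Nat.zero_le m) hmN).symm
      have e6 : ∑ n ∈ Finset.range N, (U (n + m) - U n)
          = ∑ k ∈ Finset.Ico N (N + m), U k - ∑ k ∈ Finset.Ico 0 m, U k := by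
        rw [Finset.sum_sub_distrib, e3, e4, e5]; abel
      rw [e6]
      calc ‖∑ k ∈ Finset.Ico N (N + m), U k - ∑ k ∈ Finset.Ico 0 m, U k‖
          ≤ ‖∑ k ∈ Finset.Ico N (N + m), U k‖ + ‖∑ k ∈ Finset.Ico 0 m, U k‖ := norm_sub_le _ _
        _ ≤ (Finset.Ico N (N + m)).card * M + (Finset.Ico 0 m).card * M :=
            add_le_add (hcard _) (hcard _)
        _ = 2 * M * m := by
            rw [Nat.card_Ico, Nat.card_Ico, Nat.add_sub_cancel_left, Nat.sub_zero]; ring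
  -- the main quantitative bound
  have hbound : ∀ N : ℕ, (1 / (N : ℝ)) * ‖∑ n ∈ Finset.range N, lc ^ n • (T ^ n * (A - c • 1))‖
      ≤ ∑' m : ℕ, (1 / (N : ℝ)) * (‖a m‖ * (2 * M * (min m N : ℕ))) := by
    intro N
    have hterm2 : ∀ m : ℕ, ‖(a m * lam ^ m) • (∑ n ∈ Finset.range N, (U (n + m) - U n))‖
        ≤ ‖a m‖ * (2 * M * (min m N : ℕ)) := by
      intro m
      rw [norm_smul (a m * lam ^ m) (∑ n ∈ Finset.range N, (U (n + m) - U n)), norm_mul, norm_pow, hlam, one_pow, mul_one]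
      exact mul_le_mul_of_nonneg_left (hV m N) (norm_nonneg _)
    have hs2 : Summable fun m : ℕ => ‖a m‖ * (2 * M * (min m N : ℕ)) := by
      apply Summable.of_nonneg_of_le (fun m => by positivity) ?_ (ha.mul_right (2 * M * N))
      intro m
      have hmin : ((min m N : ℕ) : ℝ) ≤ (N : ℝ) := by exact_mod_cast min_le_right m N
      have : 2 * M * ((min m N : ℕ) : ℝ) ≤ 2 * M * N :=
        mul_le_mul_of_nonneg_left hmin (by positivity)
      exact mul_le_mul_of_nonneg_left this (norm_nonneg _)
    have hsnorm : Summable fun m : ℕ =>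
        ‖(a m * lam ^ m) • (∑ n ∈ Finset.range N, (U (n + m) - U n))‖ :=
      Summable.of_nonneg_of_le (fun m => norm_nonneg _) hterm2 hs2
    rw [hswap N]
    calc (1 / (N : ℝ)) * ‖∑' m : ℕ, (a m * lam ^ m) • (∑ n ∈ Finset.range N, (U (n + m) - U n))‖
        ≤ (1 / (N : ℝ)) * ∑' m : ℕ,
            ‖(a m * lam ^ m) • (∑ n ∈ Finset.range N, (U (n + m) - U n))‖ :=
          mul_le_mul_of_nonneg_left (norm_tsum_le_tsum_norm hsnorm) (by positivity)
      _ ≤ (1 / (N : ℝ)) * ∑' m : ℕ, ‖a m‖ * (2 * M * (min m N : ℕ)) :=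
          mul_le_mul_of_nonneg_left (Summable.tsum_le_tsum hterm2 hsnorm hs2) (by positivity)
      _ = ∑' m : ℕ, (1 / (N : ℝ)) * (‖a m‖ * (2 * M * (min m N : ℕ))) := tsum_mul_left.symm
  -- the dominating sequence tends to 0
  have hg : Tendsto (fun N : ℕ => ∑' m : ℕ, (1 / (N : ℝ)) * (‖a m‖ * (2 * M * (min m N : ℕ))))
      atTop (𝓝 0) := by
    have h0 : (0 : ℝ) = ∑' _m : ℕ, (0 : ℝ) := by rw [tsum_zero]
    rw [h0]
    apply tendsto_tsum_of_dominated_convergence (bound := fun m => ‖a m‖ * (2 * M))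
      (ha.mul_right (2 * M))
    · intro m
      have hlim : Tendsto (fun N : ℕ => (‖a m‖ * (2 * M * m)) * (1 / (N : ℝ))) atTop
          (𝓝 ((‖a m‖ * (2 * M * m)) * 0)) :=
        tendsto_one_div_atTop_nhds_zero_nat.const_mul _
      rw [mul_zero] at hlim
      refine Tendsto.congr' ?_ hlim
      filter_upwards [eventually_ge_atTop m] with N hN
      rw [min_eq_left hN]; ring
    · filter_upwards [eventually_ge_atTop 1] with N hN m
      have hN0 : (0 : ℝ) < N := by exact_mod_cast hN
      rw [Real.norm_eq_abs, abs_of_nonneg (by positivity)]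
      have hmin : ((min m N : ℕ) : ℝ) ≤ (N : ℝ) := by exact_mod_cast min_le_right m N
      calc (1 / (N : ℝ)) * (‖a m‖ * (2 * M * (min m N : ℕ)))
          ≤ (1 / (N : ℝ)) * (‖a m‖ * (2 * M * N)) := by
            apply mul_le_mul_of_nonneg_left _ (by positivity)
            exact mul_le_mul_of_nonneg_left
              (mul_le_mul_of_nonneg_left hmin (by positivity)) (norm_nonneg _)
        _ = ‖a m‖ * (2 * M) := by field_simp
  refine squeeze_zero (fun N => by positivity) hbound hg
end

section
/- Let X be a complex Banach space, let T ∈ B(X) be power-bounded, let a ∈ ℓ¹(ℕ), and let λ ∈ 𝕋 be such that â(λ) = 0. Then (1/N)·‖∑_{n=0}^{N-1} conj(λ)ⁿ Tⁿ â(T)‖ → 0 as N → ∞ (operator norm). (ℤ₊-instance of Corollary 3.4 of the paper.) -/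
open Filter Topology

/-- ℤ₊-instance of Corollary 3.4: if `T` is power-bounded, `a ∈ ℓ¹(ℕ)` and
`λ ∈ 𝕋` with `â(λ) = 0`, then `(1/N)·‖∑_{n<N} conj(λ)ⁿ Tⁿ â(T)‖ → 0`. -/
theorem stmt_1 {X : Type*} [NormedAddCommGroup X] [NormedSpace ℂ X] [CompleteSpace X]
    (T : X →L[ℂ] X) (hT : ∃ M : ℝ, ∀ n : ℕ, ‖T ^ n‖ ≤ M)
    (a : ℕ → ℂ) (ha : Summable fun n : ℕ => ‖a n‖)
    (lam : ℂ) (hlam : ‖lam‖ = 1) (hzero : (∑' m : ℕ, a m * lam ^ m) = 0) :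
    Tendsto (fun N : ℕ =>
        (1 / (N : ℝ)) * ‖∑ n ∈ Finset.range N, (starRingEnd ℂ lam) ^ n •
          (T ^ n * (∑' m : ℕ, a m • T ^ m))‖)
      atTop (nhds 0) := by
  classical
  obtain ⟨M₀, hM₀⟩ := hT
  set M : ℝ := max M₀ 0 with hMdef
  have hM : ∀ n : ℕ, ‖T ^ n‖ ≤ M := fun n => le_trans (hM₀ n) (le_max_left _ _)
  have hM0 : 0 ≤ M := le_max_right _ _
  have hlc : lam * (starRingEnd ℂ) lam = 1 := by
    rw [Complex.mul_conj]
    norm_cast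
    rw [Complex.normSq_eq_norm_sq]
    simp [hlam]
  have hlamconj : ‖(starRingEnd ℂ) lam‖ = 1 := by
    rw [RCLike.norm_conj, hlam]
  -- the ergodic sums of conj(lam)^n • T^n
  set C : ℕ → (X →L[ℂ] X) := fun k => ∑ j ∈ Finset.range k,
    (starRingEnd ℂ lam) ^ j • T ^ j with hCdef
  have hns : ∀ (c : ℂ) (A : X →L[ℂ] X), ‖c • A‖ = ‖c‖ * ‖A‖ := fun c A => norm_smul c A
  have hterm_norm : ∀ j : ℕ, ‖(starRingEnd ℂ lam) ^ j • T ^ j‖ ≤ M := by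
    intro j
    rw [hns, norm_pow, hlamconj, one_pow, one_mul]
    exact hM j
  have hCd : ∀ k l : ℕ, k ≤ l → ‖C l - C k‖ ≤ (l - k : ℕ) * M := by
    intro k l hkl
    have : C l - C k = ∑ j ∈ Finset.Ico k l, (starRingEnd ℂ lam) ^ j • T ^ j := by
      rw [hCdef]
      exact (Finset.sum_Ico_eq_sub _ hkl).symm
    rw [this]
    calc ‖∑ j ∈ Finset.Ico k l, (starRingEnd ℂ lam) ^ j • T ^ j‖
        ≤ ∑ j ∈ Finset.Ico k l, ‖(starRingEnd ℂ lam) ^ j • T ^ j‖ := norm_sum_le _ _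
      _ ≤ ∑ _j ∈ Finset.Ico k l, M := Finset.sum_le_sum fun j _ => hterm_norm j
      _ = (l - k : ℕ) * M := by rw [Finset.sum_const, Nat.card_Ico, nsmul_eq_mul]
  have hC_norm : ∀ k : ℕ, ‖C k‖ ≤ (k : ℕ) * M := by
    intro k
    have := hCd 0 k (Nat.zero_le k)
    simpa [hCdef] using this
  -- key per-`N` bound
  have hb : ∀ m N : ℕ, ‖C (N + m) - C N - C m‖ ≤ 2 * M * (min m N : ℕ) := by
    intro m N
    rcases le_total m N with h | h
    · have h1 : ‖C (N + m) - C N‖ ≤ (m : ℕ) * M := by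
        simpa using hCd N (N + m) (Nat.le_add_right _ _)
      have h2 : ‖C m‖ ≤ (m : ℕ) * M := hC_norm m
      calc ‖C (N + m) - C N - C m‖ ≤ ‖C (N + m) - C N‖ + ‖C m‖ := norm_sub_le _ _
        _ ≤ (m : ℕ) * M + (m : ℕ) * M := add_le_add h1 h2
        _ = 2 * M * (m : ℕ) := by ring
        _ = 2 * M * (min m N : ℕ) := by rw [min_eq_left h]
    · have h1 : ‖C (N + m) - C m‖ ≤ (N : ℕ) * M := by
        have := hCd m (N + m) (Nat.le_add_left _ _)
        simpa using this
      have h2 : ‖C N‖ ≤ (N : ℕ) * M := hC_norm N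
      calc ‖C (N + m) - C N - C m‖ = ‖C (N + m) - C m - C N‖ := by
            congr 1; abel
        _ ≤ ‖C (N + m) - C m‖ + ‖C N‖ := norm_sub_le _ _
        _ ≤ (N : ℕ) * M + (N : ℕ) * M := add_le_add h1 h2
        _ = 2 * M * (N : ℕ) := by ring
        _ = 2 * M * (min m N : ℕ) := by rw [min_eq_right h]
  -- summability helpers
  have hsummand : ∀ n : ℕ, Summable fun m : ℕ => a m • T ^ (n + m) := by
    intro n
    apply Summable.of_norm_bounded (g := fun m => ‖a m‖ * M) (ha.mul_right M)
    intro m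
    rw [hns]
    exact mul_le_mul_of_nonneg_left (hM _) (norm_nonneg _)
  have hS : Summable fun m : ℕ => a m • T ^ m := by simpa using hsummand 0
  set S : X →L[ℂ] X := ∑' m : ℕ, a m • T ^ m with hSdef
  have halam : Summable fun m : ℕ => a m * lam ^ m := by
    apply Summable.of_norm_bounded (g := fun m => ‖a m‖) ha
    intro m
    rw [norm_mul, norm_pow, hlam, one_pow, mul_one]
  have hCdiff_bound : ∀ N m : ℕ, ‖C (N + m) - C N - C m‖ ≤ 2 * M * N := by
    intro N m
    refine le_trans (hb m N) ?_
    have : ((min m N : ℕ) : ℝ) ≤ (N : ℝ) := by exact_mod_cast Nat.min_le_right m N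
    nlinarith [hM0]
  have hsum2 : ∀ N : ℕ,
      Summable fun m : ℕ => (a m * lam ^ m) • (C (N + m) - C N - C m) := by
    intro N
    apply Summable.of_norm_bounded (g := fun m => ‖a m‖ * (2 * M * N)) (ha.mul_right _)
    intro m
    rw [hns, norm_mul, norm_pow, hlam, one_pow, mul_one]
    exact mul_le_mul_of_nonneg_left (hCdiff_bound N m) (norm_nonneg _)
  have hsumCN : ∀ N : ℕ, Summable fun m : ℕ => (a m * lam ^ m) • C N := fun N =>
    halam.smul_const (C N)
  -- the key identity
  have key : ∀ N : ℕ,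
      (∑ n ∈ Finset.range N, (starRingEnd ℂ lam) ^ n • (T ^ n * S)) =
        ∑' m : ℕ, (a m * lam ^ m) • (C (N + m) - C N - C m) := by
    intro N
    have step1 : ∀ n : ℕ, (starRingEnd ℂ lam) ^ n • (T ^ n * S) =
        ∑' m : ℕ, ((starRingEnd ℂ lam) ^ n * a m) • T ^ (n + m) := by
      intro n
      have hmul : T ^ n * S = ∑' m : ℕ, a m • T ^ (n + m) := by
        rw [hSdef, ← Summable.tsum_mul_left (T ^ n) hS]
        exact tsum_congr fun m => by rw [mul_smul_comm, ← pow_add]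
      rw [hmul, ← Summable.tsum_const_smul _ (hsummand n)]
      exact tsum_congr fun m => by rw [smul_smul]
    have step2 : ∀ m n : ℕ, ((starRingEnd ℂ lam) ^ n * a m) • T ^ (n + m) =
        (a m * lam ^ m) • ((starRingEnd ℂ lam) ^ (m + n) • T ^ (m + n)) := by
      intro m n
      rw [smul_smul, Nat.add_comm m n]
      congr 1
      have : (starRingEnd ℂ lam) ^ (n + m) = (starRingEnd ℂ lam) ^ n *
          (starRingEnd ℂ lam) ^ m := pow_add _ n m
      rw [this]
      have hpow : lam ^ m * (starRingEnd ℂ lam) ^ m = 1 := by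
        rw [← mul_pow, hlc, one_pow]
      calc (starRingEnd ℂ lam) ^ n * a m
          = a m * (lam ^ m * (starRingEnd ℂ lam) ^ m) * (starRingEnd ℂ lam) ^ n := by
            rw [hpow]; ring
        _ = a m * lam ^ m * ((starRingEnd ℂ lam) ^ n * (starRingEnd ℂ lam) ^ m) := by
            ring
    have step3 : ∀ m : ℕ,
        (∑ n ∈ Finset.range N, ((starRingEnd ℂ lam) ^ n * a m) • T ^ (n + m)) =
          (a m * lam ^ m) • (C (N + m) - C m) := by
      intro m
      have hIco : C (N + m) - C m = ∑ j ∈ Finset.Ico m (N + m),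
          (starRingEnd ℂ lam) ^ j • T ^ j := by
        rw [hCdef]
        exact (Finset.sum_Ico_eq_sub _ (Nat.le_add_left m N)).symm
      have hre : (∑ j ∈ Finset.Ico m (N + m), (starRingEnd ℂ lam) ^ j • T ^ j) =
          ∑ n ∈ Finset.range N, (starRingEnd ℂ lam) ^ (m + n) • T ^ (m + n) := by
        rw [Nat.add_comm N m, Finset.sum_Ico_eq_sum_range]
        simp
      rw [hIco, hre, Finset.smul_sum]
      exact Finset.sum_congr rfl fun n _ => step2 m n
    calc (∑ n ∈ Finset.range N, (starRingEnd ℂ lam) ^ n • (T ^ n * S))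
        = ∑ n ∈ Finset.range N, ∑' m : ℕ,
            ((starRingEnd ℂ lam) ^ n * a m) • T ^ (n + m) := by
          exact Finset.sum_congr rfl fun n _ => step1 n
      _ = ∑' m : ℕ, ∑ n ∈ Finset.range N,
            ((starRingEnd ℂ lam) ^ n * a m) • T ^ (n + m) := by
          refine (Summable.tsum_finsetSum fun n _ => ?_).symm
          apply Summable.of_norm_bounded (g := fun m => ‖a m‖ * M) (ha.mul_right M)
          intro m
          rw [hns, norm_mul, norm_pow, hlamconj, one_pow, one_mul]
          exact mul_le_mul_of_nonneg_left (hM _) (norm_nonneg _)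
      _ = ∑' m : ℕ, (a m * lam ^ m) • (C (N + m) - C m) := tsum_congr step3
      _ = ∑' m : ℕ, ((a m * lam ^ m) • (C (N + m) - C N - C m) +
            (a m * lam ^ m) • C N) := by
          refine tsum_congr fun m => ?_
          rw [← smul_add]
          congr 1
          abel
      _ = (∑' m : ℕ, (a m * lam ^ m) • (C (N + m) - C N - C m)) +
            ∑' m : ℕ, (a m * lam ^ m) • C N := Summable.tsum_add (hsum2 N) (hsumCN N)
      _ = ∑' m : ℕ, (a m * lam ^ m) • (C (N + m) - C N - C m) := by
          rw [Summable.tsum_smul_const halam, hzero, zero_smul, add_zero]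
  -- the quantitative bound
  have hboundN : ∀ N : ℕ,
      ‖∑ n ∈ Finset.range N, (starRingEnd ℂ lam) ^ n • (T ^ n * S)‖ ≤
        ∑' m : ℕ, ‖a m‖ * (2 * M) * (min m N : ℕ) := by
    intro N
    rw [key N]
    have hsnorm : Summable fun m : ℕ =>
        ‖(a m * lam ^ m) • (C (N + m) - C N - C m)‖ := by
      apply Summable.of_norm_bounded (g := fun m => ‖a m‖ * (2 * M * N)) (ha.mul_right _)
      intro m
      rw [norm_norm, hns, norm_mul, norm_pow, hlam, one_pow, mul_one]
      exact mul_le_mul_of_nonneg_left (hCdiff_bound N m) (norm_nonneg _)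
    refine le_trans (norm_tsum_le_tsum_norm hsnorm) ?_
    refine Summable.tsum_le_tsum ?_ hsnorm ?_
    · intro m
      rw [hns, norm_mul, norm_pow, hlam, one_pow, mul_one, mul_assoc]
      exact mul_le_mul_of_nonneg_left (hb m N) (norm_nonneg _)
    · apply Summable.of_norm_bounded (g := fun m => ‖a m‖ * (2 * M * N)) (ha.mul_right _)
      intro m
      have h1 : (0:ℝ) ≤ ‖a m‖ * (2 * M) * (min m N : ℕ) := by positivity
      rw [Real.norm_of_nonneg h1, mul_assoc]
      refine mul_le_mul_of_nonneg_left ?_ (norm_nonneg _)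
      have : ((min m N : ℕ) : ℝ) ≤ (N : ℝ) := by exact_mod_cast Nat.min_le_right m N
      nlinarith [hM0]
  -- the dominating sequence
  set g : ℕ → ℝ := fun N => ∑' m : ℕ, ‖a m‖ * (2 * M) * ((min m N : ℕ) / (N : ℝ))
    with hgdef
  have hratio_le_one : ∀ m N : ℕ, ((min m N : ℕ) : ℝ) / (N : ℝ) ≤ 1 := by
    intro m N
    rcases Nat.eq_zero_or_pos N with h | h
    · simp [h]
    · rw [div_le_one (by exact_mod_cast h)]
      exact_mod_cast Nat.min_le_right m N
  have hratio_nonneg : ∀ m N : ℕ, (0:ℝ) ≤ ((min m N : ℕ) : ℝ) / (N : ℝ) := by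
    intro m N; positivity
  have hg0 : Tendsto g atTop (nhds 0) := by
    have h0 : (0:ℝ) = ∑' _m : ℕ, (0:ℝ) := by simp
    rw [hgdef, h0]
    apply tendsto_tsum_of_dominated_convergence (bound := fun m => ‖a m‖ * (2 * M))
      (ha.mul_right _)
    · intro m
      have hev : (fun N : ℕ => ‖a m‖ * (2 * M) * ((min m N : ℕ) / (N : ℝ))) =ᶠ[atTop]
          fun N : ℕ => (‖a m‖ * (2 * M) * m) / (N : ℝ) := by
        filter_upwards [eventually_ge_atTop m] with N hN
        rw [min_eq_left hN]
        ring
      rw [tendsto_congr' hev]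
      exact tendsto_const_div_atTop_nhds_zero_nat _
    · filter_upwards with N m
      have h1 : (0:ℝ) ≤ ‖a m‖ * (2 * M) * ((min m N : ℕ) / (N : ℝ)) := by positivity
      rw [Real.norm_of_nonneg h1]
      calc ‖a m‖ * (2 * M) * ((min m N : ℕ) / (N : ℝ))
          ≤ ‖a m‖ * (2 * M) * 1 := by
            exact mul_le_mul_of_nonneg_left (hratio_le_one m N) (by positivity)
        _ = ‖a m‖ * (2 * M) := mul_one _
  -- squeeze
  refine squeeze_zero
    (fun N => mul_nonneg (by positivity) (norm_nonneg _)) (fun N => ?_) hg0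
  rcases Nat.eq_zero_or_pos N with h | h
  · subst h
    have h1 : (1 / ((0 : ℕ) : ℝ)) = 0 := by norm_num
    rw [h1, zero_mul]
    exact tsum_nonneg fun m => by positivity
  · have hNpos : (0:ℝ) < N := by exact_mod_cast h
    calc (1 / (N : ℝ)) * ‖∑ n ∈ Finset.range N, (starRingEnd ℂ lam) ^ n •
          (T ^ n * (∑' m : ℕ, a m • T ^ m))‖
        ≤ (1 / (N : ℝ)) * ∑' m : ℕ, ‖a m‖ * (2 * M) * (min m N : ℕ) := by
          exact mul_le_mul_of_nonneg_left (hboundN N) (by positivity)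
      _ = g N := by
          rw [hgdef, ← tsum_mul_left]
          congr 1
          ext m
          field_simp
end

section
/- Let X be a complex Hilbert space, let U be a unitary operator on X, and let a ∈ ℓ¹(ℤ). Suppose that for every λ ∈ σ(U) one has (1/N)·‖∑_{n=0}^{N-1} conj(λ)ⁿ Uⁿ â(U)‖ → 0 as N → ∞ (operator norm). Then â(U) = 0. (ℤ-instance of Proposition 3.5 of the paper.) -/
open Filter Topology

/-- ℤ-instance of Proposition 3.5: if `U` is a unitary operator on a complex Hilbert
space, `a ∈ ℓ¹(ℤ)`, and for every `λ ∈ σ(U)` the Cesàro averages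
`(1/N)·‖∑_{n<N} conj(λ)ⁿ Uⁿ â(U)‖` tend to `0`, then `â(U) = 0`. -/
theorem stmt_2 {X : Type*} [NormedAddCommGroup X] [InnerProductSpace ℂ X] [CompleteSpace X]
    (U : unitary (X →L[ℂ] X)) (a : ℤ → ℂ) (ha : Summable fun n : ℤ => ‖a n‖)
    (h : ∀ lam ∈ spectrum ℂ (U : X →L[ℂ] X),
      Tendsto (fun N : ℕ =>
          (1 / (N : ℝ)) * ‖∑ n ∈ Finset.range N, (starRingEnd ℂ lam) ^ n •
            ((U : X →L[ℂ] X) ^ n * (∑' m : ℤ, a m • ((U ^ m : unitary (X →L[ℂ] X)) : X →L[ℂ] X)))‖)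
        atTop (nhds 0)) :
    (∑' m : ℤ, a m • ((U ^ m : unitary (X →L[ℂ] X)) : X →L[ℂ] X)) = 0 := by
  set V : X →L[ℂ] X := (U : X →L[ℂ] X) with hVdef
  have hV : IsStarNormal V := Unitary.coe_isStarNormal U
  set e : ℤ → ℂ → ℂ := fun m z => if 0 ≤ m then z ^ m.toNat else (starRingEnd ℂ z) ^ (-m).toNat
    with he
  have hecont : ∀ m, Continuous (e m) := by
    intro m
    by_cases hm : 0 ≤ m
    · simpa [he, hm] using continuous_pow m.toNat
    · simp only [he, hm, if_false]; exact Complex.continuous_conj.pow _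
  have hσ : spectrum ℂ V ⊆ Metric.sphere 0 1 := Unitary.spectrum_subset_circle U
  have henorm : ∀ (m : ℤ) (z : ℂ), ‖z‖ = 1 → ‖e m z‖ = 1 := by
    intro m z hz
    by_cases hm : 0 ≤ m <;> simp [he, hm, norm_pow, hz]
  -- each basis function evaluates under cfc to the corresponding power of U
  have key : ∀ m : ℤ, cfc (e m) V = ((U ^ m : unitary (X →L[ℂ] X)) : X →L[ℂ] X) := by
    intro m
    induction m using Int.rec with
    | ofNat n =>
      have h1 : e (Int.ofNat n) = (· ^ n : ℂ → ℂ) := by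
        funext z; simp [he]
      rw [h1, cfc_pow_id V n]
      rw [show ((Int.ofNat n : ℤ)) = (n : ℤ) from rfl, zpow_natCast]
      exact (SubmonoidClass.coe_pow U n).symm
    | negSucc n =>
      have h1 : e (Int.negSucc n) = fun z : ℂ => (star z) ^ (n + 1) := by
        funext z
        simp [he, not_le.mpr (Int.negSucc_lt_zero n), Int.neg_negSucc]
      rw [h1]
      have h2 : cfc (fun z : ℂ => (star z) ^ (n + 1)) V = (star V) ^ (n + 1) := by
        rw [cfc_pow (fun z : ℂ => star z) (n + 1) V, cfc_star_id (R := ℂ) (a := V) hV]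
      rw [h2, zpow_negSucc, ← Unitary.star_eq_inv]
      rw [← star_pow]
      rfl
  -- the continuous-map family
  set g : ℤ → C(spectrum ℂ V, ℂ) := fun m =>
    ⟨(spectrum ℂ V).domRestrict fun z => a m * e m z,
      ((continuous_const.mul (hecont m)).continuousOn (s := spectrum ℂ V)).restrict⟩ with hg
  have hgnorm : ∀ m, ‖g m‖ ≤ ‖a m‖ := by
    intro m
    refine (ContinuousMap.norm_le _ (norm_nonneg _)).mpr ?_
    rintro ⟨z, hz⟩
    have hz1 : ‖z‖ = 1 := by simpa using hσ hz
    simp [hg, norm_mul, henorm m z hz1]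
  have hgsum : Summable g := Summable.of_norm_bounded ha hgnorm
  set F : ℂ → ℂ := fun z => ∑' m : ℤ, a m * e m z with hF
  have hFrest : ∀ z : spectrum ℂ V, F z = (∑' m, g m) z := by
    intro z
    rw [hF]
    exact ContinuousMap.tsum_apply hgsum z
  have hFcont : ContinuousOn F (spectrum ℂ V) := by
    rw [continuousOn_iff_continuous_restrict]
    have : (spectrum ℂ V).domRestrict F = ⇑(∑' m, g m) := funext fun z => hFrest z
    rw [this]
    exact (∑' m, g m).continuous
  -- A = cfc F V
  have hA : (∑' m : ℤ, a m • ((U ^ m : unitary (X →L[ℂ] X)) : X →L[ℂ] X)) = cfc F V := by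
    rw [cfc_eq_cfcL hV hFcont]
    have hmk : (⟨(spectrum ℂ V).domRestrict F, hFcont.restrict⟩ : C(spectrum ℂ V, ℂ))
        = ∑' m, g m := ContinuousMap.ext fun z => hFrest z
    rw [hmk, (cfcL hV).map_tsum hgsum]
    refine tsum_congr fun m => ?_
    have h1 : cfc (fun z => a m * e m z) V = cfcL hV (g m) := by
      rw [cfc_eq_cfcL (f := fun z => a m * e m z) hV ((continuous_const.mul (hecont m)).continuousOn)]
    rw [← h1, cfc_const_mul (a m) (e m) V (hecont m).continuousOn, key m]
  rw [hA] at h ⊢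
  -- F vanishes on the spectrum
  have hF0 : ∀ lam ∈ spectrum ℂ V, F lam = 0 := by
    intro lam hlam
    set c : ℂ := starRingEnd ℂ lam with hc
    have hlam1 : ‖lam‖ = 1 := by simpa using hσ hlam
    have hcl : c * lam = 1 := by
      rw [hc]
      rw [mul_comm, Complex.mul_conj']
      · norm_cast
        simp [Complex.normSq_eq_norm_sq, hlam1]
    have hSN : ∀ N : ℕ, ∑ n ∈ Finset.range N, c ^ n • (V ^ n * cfc F V)
        = cfc (fun z => ∑ n ∈ Finset.range N, c ^ n * (z ^ n * F z)) V := by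
      intro N
      have hsum : (fun z => ∑ n ∈ Finset.range N, c ^ n * (z ^ n * F z))
          = ∑ n ∈ Finset.range N, fun z : ℂ => c ^ n * (z ^ n * F z) := by
        funext z; simp
      rw [hsum, cfc_sum (fun n (z : ℂ) => c ^ n * (z ^ n * F z)) V (Finset.range N) (fun n _ =>
        (continuous_const.continuousOn (s := spectrum ℂ V)).mul
          (((continuous_pow n).continuousOn).mul hFcont))]
      refine (Finset.sum_congr rfl fun n _ => ?_)
      rw [cfc_const_mul (c ^ n) (fun z => z ^ n * F z) V (((continuous_pow n).continuousOn).mul hFcont),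
        cfc_mul (· ^ n) F V ((continuous_pow n).continuousOn) hFcont, cfc_pow_id V n]
    have hlow : ∀ N : ℕ, (N : ℝ) * ‖F lam‖
        ≤ ‖∑ n ∈ Finset.range N, c ^ n • (V ^ n * cfc F V)‖ := by
      intro N
      rw [hSN N]
      have hle := norm_apply_le_norm_cfc
        (fun z => ∑ n ∈ Finset.range N, c ^ n * (z ^ n * F z)) V hlam
        ((continuousOn_finset_sum _ fun n _ =>
          (continuous_const.continuousOn (s := spectrum ℂ V)).mul
            (((continuous_pow n).continuousOn).mul hFcont))) hV
      have hterm : ∀ n : ℕ, c ^ n * (lam ^ n * F lam) = F lam := by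
        intro n
        rw [← mul_assoc, ← mul_pow, hcl, one_pow, one_mul]
      have hval : (fun z => ∑ n ∈ Finset.range N, c ^ n * (z ^ n * F z)) lam
          = (N : ℂ) * F lam := by
        simp only
        rw [Finset.sum_congr rfl fun n _ => hterm n, Finset.sum_const, Finset.card_range,
          nsmul_eq_mul]
      rw [show (∑ n ∈ Finset.range N, c ^ n * (lam ^ n * F lam)) = (N : ℂ) * F lam from hval] at hle
      simp only [norm_mul, Complex.norm_natCast] at hle
      exact hle

    have hmain := h lam hlam
    have hev : ∀ᶠ N : ℕ in atTop, ‖F lam‖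
        ≤ (1 / (N : ℝ)) * ‖∑ n ∈ Finset.range N, c ^ n • (V ^ n * cfc F V)‖ := by
      filter_upwards [eventually_ge_atTop 1] with N hN
      have hNpos : (0 : ℝ) < N := by exact_mod_cast hN
      calc ‖F lam‖ = ((N : ℝ) * ‖F lam‖) / N := by field_simp
      _ ≤ ‖∑ n ∈ Finset.range N, c ^ n • (V ^ n * cfc F V)‖ / N := by
          gcongr
          exact hlow N
      _ = (1 / (N : ℝ)) * ‖∑ n ∈ Finset.range N, c ^ n • (V ^ n * cfc F V)‖ := by
          ring
    have hle0 : ‖F lam‖ ≤ 0 := ge_of_tendsto hmain hev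
    simpa using le_antisymm hle0 (norm_nonneg _)
  calc cfc F V = cfc (fun _ : ℂ => (0 : ℂ)) V := cfc_congr hF0
  _ = 0 := by simp only [← Pi.zero_def]; exact cfc_zero ℂ V
end

section
/- Let X be a complex Hilbert space, let U be a unitary operator on X, and let Q ∈ B(X) be an operator commuting with U. Suppose that for every λ ∈ σ(U) one has (1/N)·‖∑_{n=0}^{N-1} conj(λ)ⁿ Uⁿ Q‖ → 0 as N → ∞ (operator norm). Then Q = 0. (ℤ-instance of the remark following Proposition 3.5 of the paper.) -/
open Filter Topology

set_option maxHeartbeats 2000000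

/-- ℤ-instance of the remark after Proposition 3.5: if `U` is a unitary operator on a
complex Hilbert space, `Q ∈ B(X)` commutes with `U`, and for every `λ ∈ σ(U)` the
Cesàro averages `(1/N)·‖∑_{n<N} conj(λ)ⁿ Uⁿ Q‖` tend to `0`, then `Q = 0`. -/
theorem stmt_3 {X : Type*} [NormedAddCommGroup X] [InnerProductSpace ℂ X] [CompleteSpace X]
    (U : unitary (X →L[ℂ] X)) (Q : X →L[ℂ] X)
    (hQ : Q * (U : X →L[ℂ] X) = (U : X →L[ℂ] X) * Q)
    (h : ∀ lam ∈ spectrum ℂ (U : X →L[ℂ] X),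
      Tendsto (fun N : ℕ =>
          (1 / (N : ℝ)) * ‖∑ n ∈ Finset.range N, (starRingEnd ℂ lam) ^ n •
            ((U : X →L[ℂ] X) ^ n * Q)‖)
        atTop (nhds 0)) :
    Q = 0 := by
  rcases subsingleton_or_nontrivial X with hX | hX
  · exact Subsingleton.elim Q 0
  set u : X →L[ℂ] X := (U : X →L[ℂ] X) with hu
  have hu1 : star u * u = 1 := (Unitary.mem_iff.mp U.2).1
  have hu2 : u * star u = 1 := (Unitary.mem_iff.mp U.2).2
  set T : X →L[ℂ] X := star Q * Q with hT
  have hTsa : IsSelfAdjoint T := IsSelfAdjoint.star_mul_self Q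
  -- commutation facts
  have c1 : Commute Q u := hQ
  let uU : (X →L[ℂ] X)ˣ := ⟨u, star u, hu2, hu1⟩
  have c4 : Commute Q (star u) := Commute.units_inv_right (u := uU) c1
  have c3 : Commute (star Q) u := by simpa using c4.star_star
  have c2 : Commute (star Q) (star u) := c1.star_star
  have cTu : Commute T u := Commute.mul_left c3 c1
  have cTsu : Commute T (star u) := Commute.mul_left c2 c4
  -- the commutative C⋆-algebra generated by `u` and `T`
  set s : Set (X →L[ℂ] X) := {u, T} with hs
  have hcomm : ∀ a ∈ s, ∀ b ∈ s, a * b = b * a := by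
    rintro a (rfl | rfl) b (rfl | rfl)
    · rfl
    · exact cTu.symm
    · exact cTu
    · rfl
  have hcomm_star : ∀ a ∈ s, ∀ b ∈ s, a * star b = star b * a := by
    rintro a (rfl | rfl) b (rfl | rfl)
    · rw [hu2, hu1]
    · rw [hTsa.star_eq]; exact cTu.symm
    · exact cTsu
    · rw [hTsa.star_eq]
  letI : CommRing (StarAlgebra.adjoin ℂ s) :=
    StarAlgebra.adjoinCommRingOfComm ℂ hcomm hcomm_star
  set S := (StarAlgebra.adjoin ℂ s).topologicalClosure with hS
  letI : CommRing S :=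
    StarSubalgebra.commRingTopologicalClosure _ fun x y => mul_comm x y
  haveI hSclosed : IsClosed (S : Set (X →L[ℂ] X)) := StarSubalgebra.isClosed_topologicalClosure _
  letI : CommCStarAlgebra S := { mul_comm := mul_comm }
  have humem : u ∈ S :=
    StarSubalgebra.le_topologicalClosure _ (StarAlgebra.subset_adjoin ℂ s (by left; rfl))
  have hTmem : T ∈ S :=
    StarSubalgebra.le_topologicalClosure _ (StarAlgebra.subset_adjoin ℂ s (by right; rfl))
  set uS : S := ⟨u, humem⟩ with huS
  set TS : S := ⟨T, hTmem⟩ with hTS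
  -- a character attaining the norm of `T`
  obtain ⟨z, hzmem, hznorm⟩ := spectrum.exists_nnnorm_eq_spectralRadius (a := T)
  have hznorm' : ‖z‖ = ‖T‖ := by
    rw [hTsa.spectralRadius_eq_nnnorm] at hznorm
    exact_mod_cast congrArg ENNReal.toReal hznorm
  have hzS : z ∈ spectrum ℂ TS := by
    rw [StarSubalgebra.spectrum_eq S (a := TS)]
    exact hzmem
  obtain ⟨φ, hφT⟩ := WeakDual.CharacterSpace.mem_spectrum_iff_exists.mp hzS
  set lam : ℂ := φ uS with hlam
  have hlam_mem : lam ∈ spectrum ℂ u := by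
    have h1 := AlgHom.apply_mem_spectrum φ uS
    rwa [StarSubalgebra.spectrum_eq S (a := uS)] at h1
  have hlam_conj : (starRingEnd ℂ) lam * lam = 1 := by
    have hs1 : star uS * uS = 1 := Subtype.ext (by simpa using hu1)
    have h2 : φ (star uS) * φ uS = 1 := by rw [← map_mul, hs1, map_one]
    rw [starRingEnd_apply, hlam, ← map_star φ uS]
    exact h2
  -- main lower bound for the Cesàro sums
  have key : ∀ N : ℕ, (N : ℝ) * ‖Q‖ ≤
      ‖∑ n ∈ Finset.range N, (starRingEnd ℂ lam) ^ n • (u ^ n * Q)‖ := by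
    intro N
    set c : ℂ := (starRingEnd ℂ) lam with hc
    set D : X →L[ℂ] X := ∑ n ∈ Finset.range N, c ^ n • (u ^ n * Q) with hD
    set BS : S := ∑ n ∈ Finset.range N, c ^ n • uS ^ n with hBS
    have hBS_coe : (BS : X →L[ℂ] X) = ∑ n ∈ Finset.range N, c ^ n • u ^ n := by
      rw [hBS]
      push_cast
      rfl
    have hD_eq : D = (BS : X →L[ℂ] X) * Q := by
      rw [hD, hBS_coe, Finset.sum_mul]
      exact Finset.sum_congr rfl fun n _ => (smul_mul_assoc _ _ _).symm
    have cQB : Commute Q (BS : X →L[ℂ] X) := by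
      rw [hBS_coe]
      exact Commute.sum_right _ _ _ fun n _ => ((c1.pow_right n).smul_right _)
    have cQsB : Commute (star Q) (BS : X →L[ℂ] X) := by
      rw [hBS_coe]
      exact Commute.sum_right _ _ _ fun n _ => ((c3.pow_right n).smul_right _)
    have hstar : star D * D = ((star BS * BS * TS : S) : X →L[ℂ] X) := by
      have h2 : ((star BS * BS * TS : S) : X →L[ℂ] X)
          = star (BS : X →L[ℂ] X) * (BS : X →L[ℂ] X) * T := by
        push_cast
        rfl
      rw [hD_eq, star_mul, h2, hT]
      set B : X →L[ℂ] X := (BS : X →L[ℂ] X) with hB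
      have e1 : star Q * star B = star B * star Q := (cQB.star_star).eq
      calc star Q * star B * (B * Q)
          = star B * star Q * (B * Q) := by rw [e1]
        _ = star B * (star Q * B) * Q := by rw [mul_assoc, mul_assoc, mul_assoc]
        _ = star B * (B * star Q) * Q := by rw [cQsB.eq]
        _ = star B * B * (star Q * Q) := by rw [mul_assoc, mul_assoc, mul_assoc]
    have hφB : φ BS = (N : ℂ) := by
      rw [hBS, map_sum]
      have hterm : ∀ n ∈ Finset.range N, φ (c ^ n • uS ^ n) = 1 := by
        intro n _
        rw [map_smul, map_pow, smul_eq_mul, ← hlam, ← mul_pow, hc, hlam_conj, one_pow]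
      rw [Finset.sum_congr rfl hterm, Finset.sum_const, Finset.card_range, nsmul_eq_mul,
        mul_one]
    have hφE : ‖φ (star BS * BS * TS)‖ = (N : ℝ) ^ 2 * ‖T‖ := by
      rw [map_mul, map_mul, map_star, hφB, hφT]
      simp [norm_mul, hznorm', sq]
    have hbound : (N : ℝ) ^ 2 * ‖T‖ ≤ ‖D‖ ^ 2 := by
      calc (N : ℝ) ^ 2 * ‖T‖ = ‖φ (star BS * BS * TS)‖ := hφE.symm
        _ ≤ ‖star BS * BS * TS‖ := spectrum.norm_le_norm_of_mem (AlgHom.apply_mem_spectrum φ _)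
        _ = ‖((star BS * BS * TS : S) : X →L[ℂ] X)‖ := rfl
        _ = ‖star D * D‖ := by rw [hstar]
        _ = ‖D‖ ^ 2 := by rw [CStarRing.norm_star_mul_self]; ring
    have hTnorm : ‖T‖ = ‖Q‖ * ‖Q‖ := by rw [hT, CStarRing.norm_star_mul_self]
    rw [hTnorm] at hbound
    nlinarith [norm_nonneg D, norm_nonneg Q, (Nat.cast_nonneg N : (0:ℝ) ≤ N)]
  -- conclusion
  have hQle : ‖Q‖ ≤ 0 := by
    refine ge_of_tendsto (h lam hlam_mem) ?_
    filter_upwards [eventually_ge_atTop 1] with N hN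
    have hk := key N
    have hNpos : (0 : ℝ) < N := by exact_mod_cast hN
    calc ‖Q‖ = 1 / (N : ℝ) * ((N : ℝ) * ‖Q‖) := by field_simp
      _ ≤ 1 / (N : ℝ) * ‖∑ n ∈ Finset.range N, (starRingEnd ℂ lam) ^ n • (u ^ n * Q)‖ := by
          apply mul_le_mul_of_nonneg_left hk
          positivity
  exact norm_le_zero_iff.mp hQle
end

section
/- Let X be a complex Banach space, let T ∈ B(X) be power-bounded with M := sup_{n≥0} ‖Tⁿ‖, let a ∈ ℓ¹(ℕ) with ‖a‖₁ := ∑_{n=0}^∞ |a(n)|, and let λ ∈ 𝕋. Then for all natural numbers t, N with 1 ≤ t ≤ N: (1/N)·‖∑_{n=0}^{N-1} conj(λ)ⁿ Tⁿ â(T)‖ ≤ sup{ ‖Tᵐ â(T)‖ : m ≥ t } + M²‖a‖₁·(2t/N). (ℤ₊-instance of the quantitative bound in the remark following Lemma 3.8, proving (iii)⇒(ii) of Theorem 3.1 directly.) -/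
open Filter Topology

/-- ℤ₊-instance of the quantitative bound in the remark after Lemma 3.8: for a
power-bounded operator `T` (with `‖Tⁿ‖ ≤ M`), `a ∈ ℓ¹(ℕ)`, `λ ∈ 𝕋` and `1 ≤ t ≤ N`,
`(1/N)·‖∑_{n<N} conj(λ)ⁿ Tⁿ â(T)‖ ≤ sup_{m≥t} ‖Tᵐ â(T)‖ + M²‖a‖₁·(2t/N)`. -/
theorem stmt_14 {X : Type*} [NormedAddCommGroup X] [NormedSpace ℂ X] [CompleteSpace X]
    (T : X →L[ℂ] X) (M : ℝ) (hM : ∀ n : ℕ, ‖T ^ n‖ ≤ M)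
    (a : ℕ → ℂ) (ha : Summable fun n : ℕ => ‖a n‖)
    (lam : ℂ) (hlam : ‖lam‖ = 1) :
    ∀ t N : ℕ, 1 ≤ t → t ≤ N →
      (1 / (N : ℝ)) * ‖∑ n ∈ Finset.range N, (starRingEnd ℂ lam) ^ n •
          (T ^ n * (∑' m : ℕ, a m • T ^ m))‖ ≤
        sSup { r : ℝ | ∃ m : ℕ, t ≤ m ∧ r = ‖T ^ m * (∑' k : ℕ, a k • T ^ k)‖ } +
          M ^ 2 * (∑' n : ℕ, ‖a n‖) * (2 * (t : ℝ) / (N : ℝ)) := by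
  intro t N ht htN
  set A : X →L[ℂ] X := ∑' m : ℕ, a m • T ^ m with hA
  have hM0 : 0 ≤ M := le_trans (norm_nonneg _) (hM 0)
  have hbound : ∀ m : ℕ, ‖a m • T ^ m‖ ≤ ‖a m‖ * M := by
    intro m
    exact le_trans (ContinuousLinearMap.opNorm_smul_le _ _)
      (mul_le_mul_of_nonneg_left (hM m) (norm_nonneg _))
  have hns : Summable (fun m : ℕ => ‖a m • T ^ m‖) :=
    Summable.of_nonneg_of_le (fun _ => norm_nonneg _) hbound (ha.mul_right M)
  have hsum : Summable fun m : ℕ => a m • T ^ m := hns.of_norm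
  have ha0 : 0 ≤ ∑' n : ℕ, ‖a n‖ := tsum_nonneg fun _ => norm_nonneg _
  have hAnorm : ‖A‖ ≤ (∑' n : ℕ, ‖a n‖) * M := by
    calc ‖A‖ ≤ ∑' m : ℕ, ‖a m • T ^ m‖ := norm_tsum_le_tsum_norm hns
      _ ≤ ∑' m : ℕ, ‖a m‖ * M := Summable.tsum_le_tsum hbound hns (ha.mul_right M)
      _ = (∑' n : ℕ, ‖a n‖) * M := tsum_mul_right
  have hTnA : ∀ n : ℕ, ‖T ^ n * A‖ ≤ M ^ 2 * ∑' n : ℕ, ‖a n‖ := by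
    intro n
    calc ‖T ^ n * A‖ ≤ ‖T ^ n‖ * ‖A‖ := norm_mul_le _ _
      _ ≤ M * ((∑' n : ℕ, ‖a n‖) * M) :=
        mul_le_mul (hM n) hAnorm (norm_nonneg _) hM0
      _ = M ^ 2 * ∑' n : ℕ, ‖a n‖ := by ring
  set s : Set ℝ := { r : ℝ | ∃ m : ℕ, t ≤ m ∧ r = ‖T ^ m * A‖ } with hs
  have hs_bdd : BddAbove s := by
    refine ⟨M ^ 2 * ∑' n : ℕ, ‖a n‖, ?_⟩
    rintro r ⟨m, _, rfl⟩
    exact hTnA m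
  have hsup_mem : ∀ m : ℕ, t ≤ m → ‖T ^ m * A‖ ≤ sSup s := fun m hm =>
    le_csSup hs_bdd ⟨m, hm, rfl⟩
  have hsup0 : (0 : ℝ) ≤ sSup s := le_trans (norm_nonneg _) (hsup_mem t le_rfl)
  have hterm : ∀ n : ℕ, ‖(starRingEnd ℂ lam) ^ n • (T ^ n * A)‖ ≤ ‖T ^ n * A‖ := by
    intro n
    refine le_trans (ContinuousLinearMap.opNorm_smul_le _ _) ?_
    have h1 : ‖(starRingEnd ℂ lam) ^ n‖ = 1 := by
      rw [norm_pow, RCLike.norm_conj, hlam, one_pow]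
    rw [h1, one_mul]
  have key : ‖∑ n ∈ Finset.range N, (starRingEnd ℂ lam) ^ n • (T ^ n * A)‖ ≤
      (t : ℝ) * (M ^ 2 * ∑' n : ℕ, ‖a n‖) + ((N : ℝ) - t) * sSup s := by
    calc ‖∑ n ∈ Finset.range N, (starRingEnd ℂ lam) ^ n • (T ^ n * A)‖
        ≤ ∑ n ∈ Finset.range N, ‖(starRingEnd ℂ lam) ^ n • (T ^ n * A)‖ :=
          norm_sum_le _ _
      _ ≤ ∑ n ∈ Finset.range N, ‖T ^ n * A‖ :=
          Finset.sum_le_sum fun n _ => hterm n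
      _ = ∑ n ∈ Finset.range t, ‖T ^ n * A‖ + ∑ n ∈ Finset.Ico t N, ‖T ^ n * A‖ := by
          rw [Finset.range_eq_Ico, Finset.range_eq_Ico]
          exact (Finset.sum_Ico_consecutive _ (Nat.zero_le t) htN).symm
      _ ≤ (t : ℝ) * (M ^ 2 * ∑' n : ℕ, ‖a n‖) + ((N : ℝ) - t) * sSup s := by
          gcongr ?_ + ?_
          · calc ∑ n ∈ Finset.range t, ‖T ^ n * A‖
                ≤ ∑ _n ∈ Finset.range t, M ^ 2 * ∑' n : ℕ, ‖a n‖ :=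
                  Finset.sum_le_sum fun n _ => hTnA n
              _ = (t : ℝ) * (M ^ 2 * ∑' n : ℕ, ‖a n‖) := by
                  rw [Finset.sum_const, Finset.card_range, nsmul_eq_mul]
          · calc ∑ n ∈ Finset.Ico t N, ‖T ^ n * A‖
                ≤ ∑ _n ∈ Finset.Ico t N, sSup s :=
                  Finset.sum_le_sum fun n hn => hsup_mem n (Finset.mem_Ico.mp hn).1
              _ = ((N : ℝ) - t) * sSup s := by
                  rw [Finset.sum_const, Nat.card_Ico, nsmul_eq_mul, Nat.cast_sub htN]
  have hN1 : (1 : ℝ) ≤ (N : ℝ) := by exact_mod_cast le_trans ht htN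
  have ht0 : (1 : ℝ) ≤ (t : ℝ) := by exact_mod_cast ht
  have hC0 : 0 ≤ M ^ 2 * ∑' n : ℕ, ‖a n‖ := mul_nonneg (by positivity) ha0
  have hNpos : (0 : ℝ) < N := lt_of_lt_of_le one_pos hN1
  rw [div_mul_eq_mul_div, one_mul, div_le_iff₀ hNpos]
  have htN' : (t : ℝ) ≤ (N : ℝ) := by exact_mod_cast htN
  calc ‖∑ n ∈ Finset.range N, (starRingEnd ℂ lam) ^ n • (T ^ n * A)‖
      ≤ (t : ℝ) * (M ^ 2 * ∑' n : ℕ, ‖a n‖) + ((N : ℝ) - t) * sSup s := key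
    _ ≤ (sSup s + M ^ 2 * (∑' n : ℕ, ‖a n‖) * (2 * (t : ℝ) / (N : ℝ))) * N := by
        have h2 : M ^ 2 * (∑' n : ℕ, ‖a n‖) * (2 * (t : ℝ) / (N : ℝ)) * N
            = 2 * (t : ℝ) * (M ^ 2 * ∑' n : ℕ, ‖a n‖) := by
          field_simp
        nlinarith [mul_nonneg (sub_nonneg.mpr htN') hsup0,
          mul_nonneg (le_of_lt hNpos) hsup0,
          mul_nonneg (le_trans zero_le_one ht0) hC0]
end
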